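/- Let Y be a real-valued random variable with all absolute moments finite and fix a nonzero real λ. Then for all integers n≥l≥0, (−1)^{n−l} S_{1,λ}^Y(n,l) = Σ_{k=l}^{n} {n brace k}_{Y,λ} S_{1,−λ}(k,l). -/

import Mathlib

open MeasureTheory Finset

noncomputable section

/-- The degenerate falling factorial `(x)_{n,λ} = x(x-λ)⋯(x-(n-1)λ)`. -/
def dff (lam x : ℝ) (n : ℕ) : ℝ := ∏ i ∈ Finset.range n, (x - i * lam)

/-- The degenerate rising factorial `⟨x⟩_{n,λ} = x(x+λ)⋯(x+(n-1)λ)`. -/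
def drf (lam x : ℝ) (n : ℕ) : ℝ := ∏ i ∈ Finset.range n, (x + i * lam)

/-- The ordinary falling factorial `(x)_n = x(x-1)⋯(x-n+1)`. -/
def ffall (x : ℝ) (n : ℕ) : ℝ := ∏ i ∈ Finset.range n, (x - i)

/-- The ordinary rising factorial `⟨x⟩_n = x(x+1)⋯(x+n-1)`. -/
def frise (x : ℝ) (n : ℕ) : ℝ := ∏ i ∈ Finset.range n, (x + i)

/-- Composition `f ∘ g` of formal power series, valid when `g` has zero constant term. -/
def pscomp (f g : PowerSeries ℝ) : PowerSeries ℝ :=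
  PowerSeries.mk fun n =>
    ∑ k ∈ Finset.range (n + 1), PowerSeries.coeff (R := ℝ) k f * PowerSeries.coeff (R := ℝ) n (g ^ k)

/-- The degenerate moment generating series `F_Y = Σ_{n≥0} E[(Y)_{n,λ}] X^n/n!`. -/
def momSeries (lam : ℝ) {Ω : Type*} [MeasurableSpace Ω] (μ : Measure Ω) (Y : Ω → ℝ) :
    PowerSeries ℝ :=
  PowerSeries.mk fun n => (∫ ω, dff lam (Y ω) n ∂μ) / (n.factorial : ℝ)

/-- Taylor series at `u = 0` of the degenerate logarithm `log_λ(1+u)`: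
`Σ_{n≥1} λ^{n-1} (1)_{n,1/λ} u^n/n!`. -/
def degLogSeries (lam : ℝ) : PowerSeries ℝ :=
  PowerSeries.mk fun n => if n = 0 then 0 else lam ^ (n - 1) * dff (1 / lam) 1 n / (n.factorial : ℝ)

/-- `G_Y`, the degenerate cumulant generating series `log_{-λ}(F_Y)`, i.e. the substitution of
`F_Y - 1` into the Taylor series of `log_{-λ}(1+u)`. -/
def cumSeries (lam : ℝ) {Ω : Type*} [MeasurableSpace Ω] (μ : Measure Ω) (Y : Ω → ℝ) :
    PowerSeries ℝ :=
  pscomp (degLogSeries (-lam)) (momSeries lam μ Y - 1)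

/-- The degenerate cumulants `κ_{n,λ}(Y) := n!·(coefficient of X^n in G_Y)`. -/
def degCumulant (lam : ℝ) {Ω : Type*} [MeasurableSpace Ω] (μ : Measure Ω) (Y : Ω → ℝ)
    (n : ℕ) : ℝ :=
  (n.factorial : ℝ) * PowerSeries.coeff (R := ℝ) n (cumSeries lam μ Y)

/-- The probabilistic degenerate Stirling numbers of the second kind
`{n brace k}_{Y,λ} := n!·(coefficient of X^n in (F_Y - 1)^k/k!)`. -/
def braceY (lam : ℝ) {Ω : Type*} [MeasurableSpace Ω] (μ : Measure Ω) (Y : Ω → ℝ)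
    (n k : ℕ) : ℝ :=
  (n.factorial : ℝ) * PowerSeries.coeff (R := ℝ) n ((momSeries lam μ Y - 1) ^ k) / (k.factorial : ℝ)

/-- The probabilistic degenerate Stirling numbers of the first kind, defined by
`(-1)^{n-k} S_{1,λ}^Y(n,k) := n!·(coefficient of X^n in G_Y^k/k!)`. -/
def S1Y (lam : ℝ) {Ω : Type*} [MeasurableSpace Ω] (μ : Measure Ω) (Y : Ω → ℝ)
    (n k : ℕ) : ℝ :=
  (-1 : ℝ) ^ (n - k) * ((n.factorial : ℝ) * PowerSeries.coeff (R := ℝ) n ((cumSeries lam μ Y) ^ k) / (k.factorial : ℝ))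

/-- Taylor series of `log(1+u)`: `Σ_{n≥1} (-1)^{n-1} u^n/n`. -/
def logSeries : PowerSeries ℝ :=
  PowerSeries.mk fun n => if n = 0 then 0 else (-1 : ℝ) ^ (n - 1) / n

/-- `F^x := exp (x · Log F)` for a power series `F` with constant term `1`. -/
def psPow (F : PowerSeries ℝ) (x : ℝ) : PowerSeries ℝ :=
  pscomp (PowerSeries.exp ℝ) (PowerSeries.C (R := ℝ) x * pscomp logSeries (F - 1))

/-- `F ↦ F/X`, i.e. the shift sending `Σ a_{n+1} X^{n+1}` (with `a_0 = 0`) to `Σ a_{n+1} X^n`. -/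
def shiftDown (F : PowerSeries ℝ) : PowerSeries ℝ :=
  PowerSeries.mk fun n => PowerSeries.coeff (R := ℝ) (n + 1) F

/-- The probabilistic degenerate Bernoulli polynomials associated with `Y`:
`Σ_{n≥0} β_{n,λ}^Y(x) X^n/n! = (X/(F_Y-1))·F_Y^x`. -/
def probBernoulli (lam : ℝ) {Ω : Type*} [MeasurableSpace Ω] (μ : Measure Ω) (Y : Ω → ℝ)
    (n : ℕ) (x : ℝ) : ℝ :=
  (n.factorial : ℝ) *
    PowerSeries.coeff (R := ℝ) n ((shiftDown (momSeries lam μ Y - 1))⁻¹ * psPow (momSeries lam μ Y) x)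

/-- The probabilistic degenerate Euler polynomials associated with `Y`:
`Σ_{n≥0} 𝓔_{n,λ}^Y(x) X^n/n! = (2/(F_Y+1))·F_Y^x`. -/
def probEuler (lam : ℝ) {Ω : Type*} [MeasurableSpace Ω] (μ : Measure Ω) (Y : Ω → ℝ)
    (n : ℕ) (x : ℝ) : ℝ :=
  (n.factorial : ℝ) *
    PowerSeries.coeff (R := ℝ) n
      (PowerSeries.C (R := ℝ) 2 * (momSeries lam μ Y + 1)⁻¹ * psPow (momSeries lam μ Y) x)

/-! ### Auxiliary lemmas -/

section AuxLemmas

open PowerSeries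

lemma ffall_succ (x : ℝ) (n : ℕ) : ffall x (n + 1) = ffall x n * (x - n) :=
  Finset.prod_range_succ _ _

lemma dff_succ (m x : ℝ) (n : ℕ) : dff m x (n + 1) = dff m x n * (x - n * m) :=
  Finset.prod_range_succ _ _

lemma ffall_eq_descPochhammer (x : ℝ) (n : ℕ) :
    ffall x n = (descPochhammer ℝ n).eval x := by
  induction n with
  | zero => simp [ffall]
  | succ n ih => rw [ffall_succ, descPochhammer_succ_eval, ih]

lemma ffall_natCast (i n : ℕ) : ffall (i : ℝ) n = (i.descFactorial n : ℝ) := by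
  rw [ffall_eq_descPochhammer, descPochhammer_eval_eq_descFactorial]

/-- Vandermonde identity for the falling factorial. -/
lemma ffall_add (x y : ℝ) (n : ℕ) :
    ffall (x + y) n = ∑ ij ∈ Finset.HasAntidiagonal.antidiagonal n,
      (n.choose ij.1 : ℝ) * (ffall x ij.1 * ffall y ij.2) := by
  induction n with
  | zero => simp [ffall]
  | succ n ih =>
    rw [ffall_succ, ih, Finset.sum_mul,
      Finset.sum_antidiagonal_choose_succ_mul
        (fun i j => ffall x i * ffall y j) n, ← Finset.sum_add_distrib]
    refine Finset.sum_congr rfl fun ij hij => ?_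
    have hsum : ij.1 + ij.2 = n := Finset.HasAntidiagonal.mem_antidiagonal.mp hij
    have hsym : (n.choose ij.2 : ℝ) = (n.choose ij.1 : ℝ) := by
      rw [Nat.choose_symm_of_eq_add hsum.symm]
    rw [hsym, ffall_succ, ffall_succ]
    have hc : ((ij.1 : ℝ) + ij.2) = (n : ℝ) := by exact_mod_cast congrArg (Nat.cast : ℕ → ℝ) hsum
    linear_combination ((n.choose ij.1 : ℝ) * ffall x ij.1 * ffall y ij.2) * hc

/-- The formal binomial series `(1+X)^x`. -/
def binomPS (x : ℝ) : PowerSeries ℝ := PowerSeries.mk fun n => ffall x n / n.factorial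

lemma coeff_binomPS (x : ℝ) (n : ℕ) :
    PowerSeries.coeff (R := ℝ) n (binomPS x) = ffall x n / n.factorial := by
  simp [binomPS]

lemma binomPS_mul (x y : ℝ) : binomPS x * binomPS y = binomPS (x + y) := by
  ext n
  rw [PowerSeries.coeff_mul, coeff_binomPS, ffall_add, Finset.sum_div]
  refine Finset.sum_congr rfl fun ij hij => ?_
  have hsum : ij.1 + ij.2 = n := Finset.HasAntidiagonal.mem_antidiagonal.mp hij
  have h1 : ij.1 ≤ n := by omega
  have hfac : (n.choose ij.1 : ℝ) * ij.1.factorial * ij.2.factorial = n.factorial := by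
    have := Nat.choose_mul_factorial_mul_factorial h1
    have h2 : n - ij.1 = ij.2 := by omega
    rw [h2] at this
    exact_mod_cast this
  rw [coeff_binomPS, coeff_binomPS]
  have hf1 : (ij.1.factorial : ℝ) ≠ 0 := Nat.cast_ne_zero.mpr ij.1.factorial_ne_zero
  have hf2 : (ij.2.factorial : ℝ) ≠ 0 := Nat.cast_ne_zero.mpr ij.2.factorial_ne_zero
  have hfn : (n.factorial : ℝ) ≠ 0 := Nat.cast_ne_zero.mpr n.factorial_ne_zero
  field_simp
  linear_combination (-(ffall x ij.1 * ffall y ij.2)) * hfac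

lemma binomPS_zero : binomPS 0 = 1 := by
  ext n
  rw [coeff_binomPS]
  cases n with
  | zero => simp [ffall]
  | succ n => simp [ffall_succ, PowerSeries.coeff_one, ffall, Finset.prod_range_succ']

lemma binomPS_pow (x : ℝ) (j : ℕ) : (binomPS x) ^ j = binomPS (j * x) := by
  induction j with
  | zero => simp [binomPS_zero]
  | succ j ih =>
    rw [pow_succ, ih, binomPS_mul]
    push_cast
    ring_nf

lemma one_add_C_mul_degLog (m : ℝ) (hm : m ≠ 0) :
    1 + PowerSeries.C (R := ℝ) m * degLogSeries m = binomPS m := by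
  ext n
  rw [map_add, PowerSeries.coeff_C_mul, coeff_binomPS]
  cases n with
  | zero => simp [degLogSeries, ffall]
  | succ n =>
    rw [PowerSeries.coeff_one, if_neg (Nat.succ_ne_zero n)]
    simp only [degLogSeries, PowerSeries.coeff_mk, if_neg (Nat.succ_ne_zero n), zero_add]
    have key : m ^ (n + 1) * dff (1 / m) 1 (n + 1) = ffall m (n + 1) := by
      have hpw : m ^ (n + 1) = ∏ _i ∈ Finset.range (n + 1), m := by
        rw [Finset.prod_const, Finset.card_range]
      rw [dff, ffall, hpw, ← Finset.prod_mul_distrib]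
      refine Finset.prod_congr rfl fun i _ => ?_
      field_simp
    rw [Nat.add_sub_cancel]
    rw [show m * (m ^ n * dff (1 / m) 1 (n + 1) / ((n + 1).factorial : ℝ))
        = m ^ (n + 1) * dff (1 / m) 1 (n + 1) / ((n + 1).factorial : ℝ) by ring, key]

lemma coeff_pow_zero_of_lt {g : PowerSeries ℝ} (hg : PowerSeries.constantCoeff (R := ℝ) g = 0)
    {n k : ℕ} (h : n < k) : PowerSeries.coeff (R := ℝ) n (g ^ k) = 0 := by
  have hdvd : (PowerSeries.X : PowerSeries ℝ) ^ k ∣ g ^ k :=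
    pow_dvd_pow_of_dvd (PowerSeries.X_dvd_iff.mpr hg) k
  exact PowerSeries.X_pow_dvd_iff.mp hdvd n h

lemma coeff_pscomp (f g : PowerSeries ℝ) (n : ℕ) :
    PowerSeries.coeff (R := ℝ) n (pscomp f g) =
      ∑ k ∈ Finset.range (n + 1), PowerSeries.coeff (R := ℝ) k f * PowerSeries.coeff (R := ℝ) n (g ^ k) := by
  simp [pscomp]

lemma coeff_aeval {g : PowerSeries ℝ} (hg : PowerSeries.constantCoeff (R := ℝ) g = 0)
    (P : Polynomial ℝ) (n : ℕ) :
    PowerSeries.coeff (R := ℝ) n (Polynomial.aeval g P) =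
      ∑ k ∈ Finset.range (n + 1), P.coeff k * PowerSeries.coeff (R := ℝ) n (g ^ k) := by
  set N := max (n + 1) (P.natDegree + 1) with hN
  have hdeg : P.natDegree < N := lt_of_lt_of_le (Nat.lt_succ_self _) (le_max_right _ _)
  rw [Polynomial.aeval_def, Polynomial.eval₂_eq_sum_range' _ hdeg, map_sum]
  have hC : ∀ k : ℕ, PowerSeries.coeff (R := ℝ) n ((algebraMap ℝ (PowerSeries ℝ)) (P.coeff k) * g ^ k)
      = P.coeff k * PowerSeries.coeff (R := ℝ) n (g ^ k) := by
    intro k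
    rw [PowerSeries.algebraMap_apply, Algebra.algebraMap_self, RingHom.id_apply,
      PowerSeries.coeff_C_mul]
  simp only [hC]
  have hsub : Finset.range (n + 1) ⊆ Finset.range N :=
    Finset.range_subset_range.mpr (le_max_left _ _)
  refine (Finset.sum_subset hsub fun k _ hk => ?_).symm
  have : n < k := by simp only [Finset.mem_range, not_lt] at hk; omega
  rw [coeff_pow_zero_of_lt hg this, mul_zero]

lemma coeff_pscomp_eq_aeval {g : PowerSeries ℝ} (hg : PowerSeries.constantCoeff (R := ℝ) g = 0)
    (f : PowerSeries ℝ) {i n : ℕ} (hi : i ≤ n) :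
    PowerSeries.coeff (R := ℝ) i (pscomp f g) =
      PowerSeries.coeff (R := ℝ) i (Polynomial.aeval g (PowerSeries.trunc (n + 1) f)) := by
  rw [coeff_pscomp, coeff_aeval hg]
  refine Finset.sum_congr rfl fun k hk => ?_
  have hk' : k < n + 1 := by
    have := Finset.mem_range.mp hk; omega
  rw [PowerSeries.coeff_trunc, if_pos hk']

lemma pscomp_mul_coeff {g : PowerSeries ℝ} (hg : PowerSeries.constantCoeff (R := ℝ) g = 0)
    (f f' : PowerSeries ℝ) (n : ℕ) :
    PowerSeries.coeff (R := ℝ) n (pscomp f g * pscomp f' g) =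
      PowerSeries.coeff (R := ℝ) n (pscomp (f * f') g) := by
  rw [PowerSeries.coeff_mul]
  have step1 : ∀ ij ∈ Finset.HasAntidiagonal.antidiagonal n,
      PowerSeries.coeff (R := ℝ) ij.1 (pscomp f g) * PowerSeries.coeff (R := ℝ) ij.2 (pscomp f' g) =
      PowerSeries.coeff (R := ℝ) ij.1 (Polynomial.aeval g (PowerSeries.trunc (n + 1) f)) *
      PowerSeries.coeff (R := ℝ) ij.2 (Polynomial.aeval g (PowerSeries.trunc (n + 1) f')) := by
    intro ij hij
    have h := Finset.HasAntidiagonal.mem_antidiagonal.mp hij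
    rw [coeff_pscomp_eq_aeval hg f (by omega : ij.1 ≤ n),
      coeff_pscomp_eq_aeval hg f' (by omega : ij.2 ≤ n)]
  rw [Finset.sum_congr rfl step1, ← PowerSeries.coeff_mul, ← map_mul, coeff_aeval hg,
    coeff_pscomp]
  refine Finset.sum_congr rfl fun k hk => ?_
  have hk' : k < n + 1 := Finset.mem_range.mp hk
  congr 1
  have := PowerSeries.trunc_trunc_mul_trunc (n := n + 1) f f'
  have hco := congrArg (fun Q => Q.coeff k) this
  simp only [PowerSeries.coeff_trunc, if_pos hk'] at hco
  rw [← Polynomial.coeff_coe, Polynomial.coe_mul]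
  exact hco

lemma coeff_pscomp_pow {g : PowerSeries ℝ} (hg : PowerSeries.constantCoeff (R := ℝ) g = 0)
    (f : PowerSeries ℝ) (l n : ℕ) :
    PowerSeries.coeff (R := ℝ) n ((pscomp f g) ^ l) = PowerSeries.coeff (R := ℝ) n (pscomp (f ^ l) g) := by
  induction l generalizing n with
  | zero =>
    rw [pow_zero, pow_zero, coeff_pscomp]
    rw [Finset.sum_eq_single 0]
    · simp
    · intro k _ hk
      rw [PowerSeries.coeff_one, if_neg hk, zero_mul]
    · intro h; exact absurd (Finset.mem_range.mpr (Nat.succ_pos n)) h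
  | succ l ih =>
    rw [pow_succ, PowerSeries.coeff_mul]
    have : ∀ ij ∈ Finset.HasAntidiagonal.antidiagonal n,
        PowerSeries.coeff (R := ℝ) ij.1 ((pscomp f g) ^ l) * PowerSeries.coeff (R := ℝ) ij.2 (pscomp f g) =
        PowerSeries.coeff (R := ℝ) ij.1 (pscomp (f ^ l) g) * PowerSeries.coeff (R := ℝ) ij.2 (pscomp f g) := by
      intro ij _; rw [ih]
    rw [Finset.sum_congr rfl this, ← PowerSeries.coeff_mul, pscomp_mul_coeff hg, ← pow_succ]

lemma constantCoeff_degLog (m : ℝ) :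
    PowerSeries.constantCoeff (R := ℝ) (degLogSeries m) = 0 := by
  rw [← PowerSeries.coeff_zero_eq_constantCoeff_apply]
  simp [degLogSeries]

/-- The EGF coefficients of powers of the degenerate log. -/
noncomputable def Acoef (m : ℝ) (n k : ℕ) : ℝ :=
  (n.factorial : ℝ) * PowerSeries.coeff (R := ℝ) n ((degLogSeries m) ^ k) / (k.factorial : ℝ)

lemma dff_nat_mul (m : ℝ) (i j : ℕ) :
    dff m ((i : ℝ) * m) j = m ^ j * (i.descFactorial j : ℝ) := by
  have hpw : m ^ j = ∏ _i ∈ Finset.range j, m := by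
    rw [Finset.prod_const, Finset.card_range]
  rw [← ffall_natCast, dff, ffall, hpw, ← Finset.prod_mul_distrib]
  refine Finset.prod_congr rfl fun t _ => ?_
  ring

/-- The key evaluation identity: the EGF coefficients expand the falling factorial
at points `i*m` in terms of degenerate falling factorials. -/
lemma eval_identity (m : ℝ) (hm : m ≠ 0) (i k : ℕ) :
    ffall ((i : ℝ) * m) k =
      ∑ j ∈ Finset.range (k + 1), Acoef m k j * dff m ((i : ℝ) * m) j := by
  classical
  set ℓ := degLogSeries m with hℓ
  have hconst : PowerSeries.constantCoeff (R := ℝ) ℓ = 0 := constantCoeff_degLog m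
  -- LHS via binomial series
  have hL : ffall ((i : ℝ) * m) k =
      (k.factorial : ℝ) * PowerSeries.coeff (R := ℝ) k ((1 + PowerSeries.C (R := ℝ) m * ℓ) ^ i) := by
    rw [one_add_C_mul_degLog m hm, binomPS_pow, coeff_binomPS]
    field_simp
  rw [hL]
  -- expand the power via add_pow
  have hpow : (1 + PowerSeries.C (R := ℝ) m * ℓ) ^ i =
      ∑ j ∈ Finset.range (i + 1), PowerSeries.C (R := ℝ) ((i.choose j : ℝ) * m ^ j) * ℓ ^ j := by
    rw [add_comm, add_pow]
    refine Finset.sum_congr rfl fun j _ => ?_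
    rw [one_pow, mul_one, mul_pow, map_mul, map_pow,
      ← map_natCast (PowerSeries.C (R := ℝ)) (i.choose j)]
    ring
  rw [hpow, map_sum]
  have hterm : ∀ j, PowerSeries.coeff (R := ℝ) k (PowerSeries.C (R := ℝ) ((i.choose j : ℝ) * m ^ j) * ℓ ^ j)
      = (i.choose j : ℝ) * m ^ j * PowerSeries.coeff (R := ℝ) k (ℓ ^ j) := by
    intro j; rw [PowerSeries.coeff_C_mul]
  simp only [hterm]
  -- both sums equal the sum over range (max i k + 1)
  have hmax : ∀ N : ℕ, i + 1 ≤ N → k + 1 ≤ N →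
      (k.factorial : ℝ) * ∑ j ∈ Finset.range (i + 1),
          (i.choose j : ℝ) * m ^ j * PowerSeries.coeff (R := ℝ) k (ℓ ^ j) =
      (k.factorial : ℝ) * ∑ j ∈ Finset.range N,
          (i.choose j : ℝ) * m ^ j * PowerSeries.coeff (R := ℝ) k (ℓ ^ j) := by
    intro N h1 _
    congr 1
    refine Finset.sum_subset (Finset.range_subset_range.mpr h1) fun j _ hj => ?_
    have : i < j := by simp only [Finset.mem_range, not_lt] at hj ⊢; omega
    rw [Nat.choose_eq_zero_of_lt this, Nat.cast_zero, zero_mul, zero_mul]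
  have hRHS : ∑ j ∈ Finset.range (k + 1), Acoef m k j * dff m ((i : ℝ) * m) j =
      (k.factorial : ℝ) * ∑ j ∈ Finset.range (max (i + 1) (k + 1)),
          (i.choose j : ℝ) * m ^ j * PowerSeries.coeff (R := ℝ) k (ℓ ^ j) := by
    rw [Finset.mul_sum]
    rw [← Finset.sum_subset (Finset.range_subset_range.mpr (le_max_right (i+1) (k+1)))
      (fun j _ hj => ?_)]
    · refine Finset.sum_congr rfl fun j hj => ?_
      have hjk : j ≤ k := by have := Finset.mem_range.mp hj; omega
      rw [Acoef, dff_nat_mul]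
      have hdesc : (i.descFactorial j : ℝ) = (i.choose j : ℝ) * (j.factorial : ℝ) := by
        rw [← Nat.cast_mul, Nat.descFactorial_eq_factorial_mul_choose]
        push_cast; ring
      have hfj : (j.factorial : ℝ) ≠ 0 := Nat.cast_ne_zero.mpr j.factorial_ne_zero
      rw [hdesc]
      field_simp
      ring
    · have : k < j := by simp only [Finset.mem_range, not_lt] at hj ⊢; omega
      rw [coeff_pow_zero_of_lt hconst this, mul_zero, mul_zero]
  rw [hRHS, hmax (max (i + 1) (k + 1)) (le_max_left _ _) (le_max_right _ _)]

/-- Uniqueness: `S1neg` coincides with the EGF coefficients. -/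
lemma S1neg_eq_Acoef (m : ℝ) (hm : m ≠ 0) (S1neg : ℕ → ℕ → ℝ)
    (hS1neg : ∀ (x : ℝ) (n : ℕ),
      ffall x n = ∑ k ∈ Finset.range (n + 1), S1neg n k * dff m x k)
    (k : ℕ) : ∀ i ≤ k, S1neg k i = Acoef m k i := by
  have hzero : ∀ i : ℕ, ∑ j ∈ Finset.range (k + 1),
      (S1neg k j - Acoef m k j) * (m ^ j * (i.descFactorial j : ℝ)) = 0 := by
    intro i
    have h1 := hS1neg ((i : ℝ) * m) k
    have h2 := eval_identity m hm i k
    have : ∑ j ∈ Finset.range (k + 1), (S1neg k j - Acoef m k j) * dff m ((i : ℝ) * m) j = 0 := by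
      simp only [sub_mul, Finset.sum_sub_distrib]
      rw [← h1, ← h2, sub_self]
    calc ∑ j ∈ Finset.range (k + 1),
          (S1neg k j - Acoef m k j) * (m ^ j * (i.descFactorial j : ℝ))
        = ∑ j ∈ Finset.range (k + 1), (S1neg k j - Acoef m k j) * dff m ((i : ℝ) * m) j := by
          refine Finset.sum_congr rfl fun j _ => ?_
          rw [dff_nat_mul]
      _ = 0 := this
  intro i
  induction i using Nat.strong_induction_on with
  | _ i IH =>
    intro hik
    have hs := hzero i
    rw [Finset.sum_eq_single i] at hs
    · have hne : m ^ i * (i.descFactorial i : ℝ) ≠ 0 := by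
        rw [Nat.descFactorial_self]
        exact mul_ne_zero (pow_ne_zero _ hm) (Nat.cast_ne_zero.mpr i.factorial_ne_zero)
      have := mul_eq_zero.mp hs
      rcases this with h | h
      · linarith [sub_eq_zero.mp h]
      · exact absurd h hne
    · intro j hj hji
      rcases lt_or_gt_of_ne hji with hlt | hgt
      · rw [IH j hlt (by omega), sub_self, zero_mul]
      · rw [Nat.descFactorial_eq_zero_iff_lt.mpr hgt, Nat.cast_zero, mul_zero, mul_zero]
    · intro h; exact absurd (Finset.mem_range.mpr (by omega)) h

end AuxLemmas

theorem S1Y_eq_sum_braceY_mul_degStirling1 {Ω : Type*} [MeasurableSpace Ω] (μ : MeasureTheory.Measure Ω)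
    [MeasureTheory.IsProbabilityMeasure μ] (Y : Ω → ℝ) (hY : Measurable Y)
    (hmom : ∀ n : ℕ, MeasureTheory.Integrable (fun ω => |Y ω| ^ n) μ)
    (lam : ℝ) (hlam : lam ≠ 0)
    (S1neg : ℕ → ℕ → ℝ)
    (hS1neg : ∀ (x : ℝ) (n : ℕ),
      ffall x n = ∑ k ∈ Finset.range (n + 1), S1neg n k * dff (-lam) x k)
    (n l : ℕ) (hln : l ≤ n) :
    (-1 : ℝ) ^ (n - l) * S1Y lam μ Y n l =
      ∑ k ∈ Finset.Icc l n, braceY lam μ Y n k * S1neg k l := by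
  classical
  have hm : (-lam) ≠ 0 := neg_ne_zero.mpr hlam
  have hg : PowerSeries.constantCoeff (R := ℝ) (momSeries lam μ Y - 1) = 0 := by
    have hF0 : PowerSeries.constantCoeff (R := ℝ) (momSeries lam μ Y) = 1 := by
      rw [momSeries, ← PowerSeries.coeff_zero_eq_constantCoeff_apply, PowerSeries.coeff_mk]
      simp [dff]
    rw [map_sub, hF0, map_one, sub_self]
  have hconstl : PowerSeries.constantCoeff (R := ℝ) (degLogSeries (-lam)) = 0 := constantCoeff_degLog _
  have hGl : PowerSeries.coeff (R := ℝ) n ((cumSeries lam μ Y) ^ l) =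
      ∑ k ∈ Finset.range (n + 1),
        PowerSeries.coeff (R := ℝ) k ((degLogSeries (-lam)) ^ l) *
          PowerSeries.coeff (R := ℝ) n ((momSeries lam μ Y - 1) ^ k) := by
    rw [cumSeries, coeff_pscomp_pow hg, coeff_pscomp]
  have hSA : ∀ k, l ≤ k → S1neg k l = Acoef (-lam) k l :=
    fun k hk => S1neg_eq_Acoef (-lam) hm S1neg hS1neg k l hk
  simp only [S1Y]
  rw [← mul_assoc, ← pow_add]
  have heven : (-1 : ℝ) ^ (n - l + (n - l)) = 1 := Even.neg_one_pow ⟨n - l, rfl⟩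
  rw [heven, one_mul, hGl, Finset.mul_sum, Finset.sum_div]
  have hsub : Finset.Icc l n ⊆ Finset.range (n + 1) := fun k hk =>
    Finset.mem_range.mpr (by have := (Finset.mem_Icc.mp hk).2; omega)
  rw [← Finset.sum_subset hsub ?hzero]
  · refine Finset.sum_congr rfl fun k hk => ?_
    obtain ⟨hlk, hkn⟩ := Finset.mem_Icc.mp hk
    rw [braceY, hSA k hlk, Acoef]
    have hfk : ((k.factorial : ℝ)) ≠ 0 := Nat.cast_ne_zero.mpr k.factorial_ne_zero
    have hfl : ((l.factorial : ℝ)) ≠ 0 := Nat.cast_ne_zero.mpr l.factorial_ne_zero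
    field_simp
  · intro k hk hknot
    have hkl : k < l := by
      have h1 := Finset.mem_range.mp hk
      simp only [Finset.mem_Icc, not_and, not_le] at hknot
      omega
    rw [coeff_pow_zero_of_lt hconstl hkl, zero_mul, mul_zero, zero_div]

end
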